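/- Suppose I ≥ 2, let 0 < ε ≤ M, set η = ε/M² and T = ⌈2·M²·ln(I)/ε²⌉, and run the Hedge algorithm where in every round t ∈ {1,…,T} the point θ_t is a best response to p_t. Then the uniform empirical distribution over θ_1,…,θ_T is an ε-maximin strategy for nature: for every p ∈ Δ, (1/T)·Σ_{t=1}^T R(p,θ_t) ≥ v̄ − ε, where v̄ = inf_{p∈Δ} sup_{θ∈Θ} R(p,θ). -/

import Mathlib

open Finset

lemma exp_neg_le_quad (x : ℝ) (hx : 0 ≤ x) : Real.exp (-x) ≤ 1 - x + x ^ 2 / 2 := by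
  have hder : ∀ t : ℝ, HasDerivAt (fun u : ℝ => 1 - u + u ^ 2 / 2 - Real.exp (-u))
      (-1 + t + Real.exp (-t)) t := by
    intro t
    have h1 : HasDerivAt (fun u : ℝ => Real.exp (-u)) (-Real.exp (-t)) t := by
      exact ((hasDerivAt_id' t).neg).exp.congr_deriv (by simp)
    have h2 : HasDerivAt (fun u : ℝ => 1 - u + u ^ 2 / 2) (-1 + t) t := by
      have h3 : HasDerivAt (fun u : ℝ => u ^ 2 / 2) t t := by
        simpa using (hasDerivAt_pow 2 t).div_const 2
      have h4 : HasDerivAt (fun u : ℝ => 1 - u) (-1) t := by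
        simpa using (hasDerivAt_id t).const_sub 1
      exact h4.add h3
    exact (h2.sub h1).congr_deriv (by ring)
  have mono : MonotoneOn (fun u : ℝ => 1 - u + u ^ 2 / 2 - Real.exp (-u)) (Set.Ici 0) := by
    apply monotoneOn_of_deriv_nonneg (convex_Ici 0)
    · exact (Continuous.continuousOn (by continuity))
    · exact fun t _ => (hder t).differentiableAt.differentiableWithinAt
    · intro t _
      rw [(hder t).deriv]
      have := Real.add_one_le_exp (-t)
      linarith
  have h0 := mono (Set.self_mem_Ici) (Set.mem_Ici.mpr hx) hx
  norm_num at h0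
  linarith

/-- ε-maximin strategy for nature via Hedge: with `η = ε/M²` and
`T = ⌈2 M² ln I / ε²⌉`, the uniform empirical distribution over nature's best
responses `θ_1,…,θ_T` satisfies `(1/T) Σ_t R(p,θ_t) ≥ v̄ − ε` for every `p` in
the simplex. -/
theorem hedge_eps_maximin
    (I : ℕ) (hI : 2 ≤ I) (Θ : Type*) [Nonempty Θ] (M : ℝ) (hM : 0 < M)
    (R : Fin I → Θ → ℝ) (hR : ∀ i θ, 0 ≤ R i θ ∧ R i θ ≤ M)
    (ε : ℝ) (hε0 : 0 < ε) (hεM : ε ≤ M)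
    (η : ℝ) (hη : η = ε / M ^ 2)
    (T : ℕ) (hT : T = ⌈2 * M ^ 2 * Real.log I / ε ^ 2⌉₊)
    (θ : ℕ → Θ) (w : ℕ → Fin I → ℝ) (p : ℕ → Fin I → ℝ)
    (hw0 : ∀ i, w 0 i = 1)
    (hw : ∀ t i, w (t + 1) i = w t i * Real.exp (-η * R i (θ (t + 1))))
    (hp : ∀ t i, p (t + 1) i = w t i / ∑ j, w t j)
    (hbr : ∀ t ∈ Finset.Icc 1 T,
      ∑ i, p t i * R i (θ t) = ⨆ θ' : Θ, ∑ i, p t i * R i θ') :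
    ∀ q : Fin I → ℝ, (∀ i, 0 ≤ q i) → ∑ i, q i = 1 →
      (1 / (T : ℝ)) * ∑ t ∈ Finset.Icc 1 T, ∑ i, q i * R i (θ t)
        ≥ sInf {v : ℝ | ∃ q' : Fin I → ℝ, (∀ i, 0 ≤ q' i) ∧ ∑ i, q' i = 1 ∧
            v = ⨆ θ' : Θ, ∑ i, q' i * R i θ'} - ε := by
  intro q hq hq1
  obtain ⟨θ0⟩ := (inferInstance : Nonempty Θ)
  haveI : Nonempty (Fin I) := ⟨⟨0, by omega⟩⟩
  set S : Set ℝ := {v : ℝ | ∃ q' : Fin I → ℝ, (∀ i, 0 ≤ q' i) ∧ ∑ i, q' i = 1 ∧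
      v = ⨆ θ' : Θ, ∑ i, q' i * R i θ'} with hSdef
  -- basic positivity facts
  have hM2 : (0:ℝ) < M ^ 2 := by positivity
  have hη0 : 0 < η := by rw [hη]; positivity
  have hI1 : (1:ℝ) < (I:ℝ) := by exact_mod_cast (by omega : 1 < I)
  have hI0 : (0:ℝ) < (I:ℝ) := by linarith
  have hlog : 0 < Real.log I := Real.log_pos hI1
  have hTxpos : (0:ℝ) < 2 * M ^ 2 * Real.log I / ε ^ 2 := by positivity
  have hT0 : 0 < T := by rw [hT]; exact Nat.ceil_pos.mpr hTxpos
  have hTR : (0:ℝ) < (T:ℝ) := by exact_mod_cast hT0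
  have hTge : 2 * M ^ 2 * Real.log I / ε ^ 2 ≤ (T:ℝ) := by rw [hT]; exact Nat.le_ceil _
  -- positivity of weights
  have hwpos : ∀ t i, 0 < w t i := by
    intro t
    induction t with
    | zero => intro i; rw [hw0]; norm_num
    | succ n ih => intro i; rw [hw]; exact mul_pos (ih i) (Real.exp_pos _)
  have hWpos : ∀ t, 0 < ∑ j, w t j :=
    fun t => Finset.sum_pos (fun j _ => hwpos t j) Finset.univ_nonempty
  -- p lies in the simplex
  have hpnn : ∀ t i, 0 ≤ p (t+1) i := by
    intro t i; rw [hp]; exact div_nonneg (hwpos t i).le (hWpos t).le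
  have hpsum : ∀ t, ∑ i, p (t+1) i = 1 := by
    intro t
    simp only [hp]
    rw [← Finset.sum_div, div_self (hWpos t).ne']
  -- bounds on the sup
  have hbdd : ∀ q' : Fin I → ℝ, (∀ i, 0 ≤ q' i) → (∑ i, q' i = 1) →
      BddAbove (Set.range fun θ' : Θ => ∑ i, q' i * R i θ') := by
    intro q' hq' hq'1
    refine ⟨M, ?_⟩
    rintro x ⟨θ', rfl⟩
    calc ∑ i, q' i * R i θ' ≤ ∑ i, q' i * M :=
          Finset.sum_le_sum fun i _ => mul_le_mul_of_nonneg_left (hR i θ').2 (hq' i)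
      _ = M := by rw [← Finset.sum_mul, hq'1, one_mul]
  have hSnn : ∀ v ∈ S, (0:ℝ) ≤ v := by
    rintro v ⟨q', hq', hq'1, rfl⟩
    refine le_trans ?_ (le_ciSup (hbdd q' hq' hq'1) θ0)
    exact Finset.sum_nonneg fun i _ => mul_nonneg (hq' i) (hR i θ0).1
  have hSbdd : BddBelow S := ⟨0, hSnn⟩
  -- nature's values dominate the minimax value
  have hv_le : ∀ t ∈ Finset.Icc 1 T, sInf S ≤ ∑ i, p t i * R i (θ t) := by
    intro t ht
    rw [hbr t ht]
    obtain ⟨u, rfl⟩ : ∃ u, t = u + 1 := ⟨t - 1, by have := (Finset.mem_Icc.mp ht).1; omega⟩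
    exact csInf_le hSbdd ⟨p (u+1), hpnn u, hpsum u, rfl⟩
  -- one step of the potential bound
  have hstep : ∀ t, ∑ j, w (t+1) j ≤
      (∑ j, w t j) * Real.exp (η^2*M^2/2 - η * ∑ i, p (t+1) i * R i (θ (t+1))) := by
    intro t
    have hpR : ∑ i, p (t+1) i * R i (θ (t+1))
        = (∑ i, w t i * R i (θ (t+1))) / (∑ j, w t j) := by
      simp only [hp]
      rw [Finset.sum_div]
      exact Finset.sum_congr rfl fun i _ => by rw [div_mul_eq_mul_div]
    have h1 : ∑ j, w (t+1) j ≤ ∑ j, w t j * (1 - η * R j (θ (t+1)) + η^2*M^2/2) := by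
      apply Finset.sum_le_sum
      intro j _
      rw [hw, neg_mul]
      have hx : 0 ≤ η * R j (θ (t+1)) := mul_nonneg hη0.le (hR _ _).1
      have hquad := exp_neg_le_quad (η * R j (θ (t+1))) hx
      have hsq : (η * R j (θ (t+1)))^2 ≤ η^2 * M^2 := by
        rw [mul_pow]
        exact mul_le_mul_of_nonneg_left
          (pow_le_pow_left₀ (hR _ _).1 (hR _ _).2 2) (by positivity)
      have h2 : Real.exp (-(η * R j (θ (t+1)))) ≤ 1 - η * R j (θ (t+1)) + η^2*M^2/2 := by
        linarith
      exact mul_le_mul_of_nonneg_left h2 (hwpos t j).le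
    have e1 : ∑ j, w t j * (1 - η * R j (θ (t+1)) + η^2*M^2/2)
        = (∑ j, w t j) + (η^2*M^2/2) * (∑ j, w t j) - η * ∑ j, w t j * R j (θ (t+1)) := by
      rw [Finset.mul_sum, Finset.mul_sum, ← Finset.sum_add_distrib, ← Finset.sum_sub_distrib]
      exact Finset.sum_congr rfl fun j _ => by ring
    have e2 : (∑ j, w t j) * (1 + (η^2*M^2/2 - η * ∑ i, p (t+1) i * R i (θ (t+1))))
        = (∑ j, w t j) + (η^2*M^2/2) * (∑ j, w t j) - η * ∑ j, w t j * R j (θ (t+1)) := by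
      have hc : (∑ j, w t j) * (η * ((∑ i, w t i * R i (θ (t+1))) / (∑ j, w t j)))
          = η * ∑ i, w t i * R i (θ (t+1)) := by
        rw [mul_left_comm, mul_comm (∑ j, w t j), div_mul_cancel₀ _ (hWpos t).ne']
      rw [hpR, mul_add, mul_one, mul_sub, hc]
      ring
    have h3 : (∑ j, w t j) * (1 + (η^2*M^2/2 - η * ∑ i, p (t+1) i * R i (θ (t+1))))
        ≤ (∑ j, w t j) * Real.exp (η^2*M^2/2 - η * ∑ i, p (t+1) i * R i (θ (t+1))) := by
      apply mul_le_mul_of_nonneg_left _ (hWpos t).le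
      have := Real.add_one_le_exp (η^2*M^2/2 - η * ∑ i, p (t+1) i * R i (θ (t+1)))
      linarith
    calc ∑ j, w (t+1) j ≤ ∑ j, w t j * (1 - η * R j (θ (t+1)) + η^2*M^2/2) := h1
      _ = (∑ j, w t j) * (1 + (η^2*M^2/2 - η * ∑ i, p (t+1) i * R i (θ (t+1)))) := by
          rw [e1, e2]
      _ ≤ _ := h3
  -- telescoping potential bound
  have htel : ∀ n, ∑ j, w n j ≤
      (I:ℝ) * Real.exp ((n:ℝ) * (η^2*M^2/2) - η * ∑ s ∈ Finset.Icc 1 n, ∑ i, p s i * R i (θ s)) := by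
    intro n
    induction n with
    | zero => simp [hw0]
    | succ n ih =>
      calc ∑ j, w (n+1) j
          ≤ (∑ j, w n j) * Real.exp (η^2*M^2/2 - η * ∑ i, p (n+1) i * R i (θ (n+1))) := hstep n
        _ ≤ ((I:ℝ) * Real.exp ((n:ℝ) * (η^2*M^2/2) - η * ∑ s ∈ Finset.Icc 1 n, ∑ i, p s i * R i (θ s)))
              * Real.exp (η^2*M^2/2 - η * ∑ i, p (n+1) i * R i (θ (n+1))) :=
            mul_le_mul_of_nonneg_right ih (Real.exp_pos _).le
        _ = (I:ℝ) * Real.exp (((n:ℕ)+1:ℝ) * (η^2*M^2/2)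
              - η * ∑ s ∈ Finset.Icc 1 (n+1), ∑ i, p s i * R i (θ s)) := by
            rw [mul_assoc, ← Real.exp_add, Finset.sum_Icc_succ_top (by omega : 1 ≤ n + 1)]
            congr 1
            ring
        _ = _ := by push_cast; ring_nf
  -- closed form for the weights
  have hwf : ∀ t i, w t i = Real.exp (-η * ∑ s ∈ Finset.Icc 1 t, R i (θ s)) := by
    intro t i
    induction t with
    | zero => simp [hw0]
    | succ n ih =>
      rw [hw, ih, ← Real.exp_add, Finset.sum_Icc_succ_top (by omega : 1 ≤ n + 1)]
      congr 1
      ring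
  -- per-expert bound
  have hi : ∀ i : Fin I, (∑ s ∈ Finset.Icc 1 T, ∑ j, p s j * R j (θ s))
      - Real.log I / η - (T:ℝ) * (η*M^2/2) ≤ ∑ s ∈ Finset.Icc 1 T, R i (θ s) := by
    intro i
    have hexp : Real.exp (-η * ∑ s ∈ Finset.Icc 1 T, R i (θ s))
        ≤ Real.exp (Real.log I + ((T:ℝ) * (η^2*M^2/2)
            - η * ∑ s ∈ Finset.Icc 1 T, ∑ j, p s j * R j (θ s))) := by
      calc Real.exp (-η * ∑ s ∈ Finset.Icc 1 T, R i (θ s)) = w T i := (hwf T i).symm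
        _ ≤ ∑ j, w T j := Finset.single_le_sum (fun j _ => (hwpos T j).le) (Finset.mem_univ i)
        _ ≤ (I:ℝ) * Real.exp ((T:ℝ) * (η^2*M^2/2)
              - η * ∑ s ∈ Finset.Icc 1 T, ∑ j, p s j * R j (θ s)) := htel T
        _ = _ := by rw [Real.exp_add, Real.exp_log hI0]
    have h := Real.exp_le_exp.mp hexp
    have hc : η * (Real.log I / η) = Real.log I := mul_div_cancel₀ _ hη0.ne'
    have h2 : η * ((∑ s ∈ Finset.Icc 1 T, ∑ j, p s j * R j (θ s))
        - Real.log I / η - (T:ℝ) * (η*M^2/2)) ≤ η * ∑ s ∈ Finset.Icc 1 T, R i (θ s) := by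
      nlinarith [h, hc]
    exact le_of_mul_le_mul_left h2 hη0
  -- cumulative best-response values dominate T * sInf S
  have hRP : (T:ℝ) * sInf S ≤ ∑ s ∈ Finset.Icc 1 T, ∑ j, p s j * R j (θ s) := by
    calc (T:ℝ) * sInf S = ∑ _s ∈ Finset.Icc 1 T, sInf S := by
          rw [Finset.sum_const, Nat.card_Icc]
          simp [nsmul_eq_mul]
      _ ≤ _ := Finset.sum_le_sum hv_le
  -- combine with q
  have hfin : (T:ℝ) * sInf S - Real.log I / η - (T:ℝ) * (η*M^2/2)
      ≤ ∑ i, q i * ∑ s ∈ Finset.Icc 1 T, R i (θ s) := by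
    calc (T:ℝ) * sInf S - Real.log I / η - (T:ℝ) * (η*M^2/2)
        = ∑ i, q i * ((T:ℝ) * sInf S - Real.log I / η - (T:ℝ) * (η*M^2/2)) := by
          rw [← Finset.sum_mul, hq1, one_mul]
      _ ≤ ∑ i, q i * ∑ s ∈ Finset.Icc 1 T, R i (θ s) := by
          apply Finset.sum_le_sum
          intro i _
          apply mul_le_mul_of_nonneg_left _ (hq i)
          exact le_trans (by linarith [hRP]) (hi i)
  have hswap : ∑ t ∈ Finset.Icc 1 T, ∑ i, q i * R i (θ t)
      = ∑ i, q i * ∑ t ∈ Finset.Icc 1 T, R i (θ t) := by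
    rw [Finset.sum_comm]
    exact Finset.sum_congr rfl fun i _ => (Finset.mul_sum _ _ _).symm
  -- final arithmetic
  have hηM2 : η * M ^ 2 = ε := by rw [hη]; field_simp
  have key : 2 * M ^ 2 * Real.log I ≤ ε ^ 2 * (T:ℝ) := by
    have := (div_le_iff₀ (by positivity : (0:ℝ) < ε ^ 2)).mp hTge
    linarith
  have h1 : Real.log I / η ≤ ε / 2 * (T:ℝ) := by
    rw [div_le_iff₀ hη0] at *
    rw [hη]
    have heq : ε / 2 * (T:ℝ) * (ε / M ^ 2) = ε ^ 2 * (T:ℝ) / (2 * M ^ 2) := by ring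
    rw [heq, le_div_iff₀ (by positivity)]
    nlinarith [key]
  rw [ge_iff_le, hswap]
  have hmul := mul_le_mul_of_nonneg_left hfin (le_of_lt (one_div_pos.mpr hTR))
  have heq2 : 1/(T:ℝ) * ((T:ℝ) * sInf S - Real.log I / η - (T:ℝ) * (η*M^2/2))
      = sInf S - (Real.log I / η) / (T:ℝ) - η * M^2 / 2 := by
    field_simp
  have h3 : (Real.log I / η) / (T:ℝ) ≤ ε / 2 := by
    rw [div_le_iff₀ hTR]
    linarith [h1]
  have h4 : η * M ^ 2 / 2 = ε / 2 := by rw [hηM2]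
  calc sInf S - ε ≤ sInf S - (Real.log I / η) / (T:ℝ) - η * M^2 / 2 := by
        rw [h4]; linarith
    _ = 1/(T:ℝ) * ((T:ℝ) * sInf S - Real.log I / η - (T:ℝ) * (η*M^2/2)) := heq2.symm
    _ ≤ _ := hmul
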